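/- Fix positive integers d, m and C ≥ 2, a label y ∈ {1,…,C}, segments x_1,…,x_m ∈ ℝ^d and a matrix W ∈ ℝ^{C×d} with rows w_1,…,w_C. Then the map u ↦ L^SA(W,u) = −log σ_y(W x̃), where a_j = σ_j(⟨u,x_1⟩,…,⟨u,x_m⟩) and x̃ = Σ_j a_j x_j, is differentiable everywhere on ℝ^d and its gradient is ∇_u L^SA(W,u) = −Σ_{j=1}^m a_j ⟨x_j, w_y − Σ_{k=1}^C σ_k(W x̃) w_k⟩ (x_j − x̃). -/

import Mathlib

open scoped RealInnerProductSpace BigOperators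

/-- Softmax of a finite family of reals. -/
noncomputable def softmax {ι : Type*} [Fintype ι] (z : ι → ℝ) (k : ι) : ℝ :=
  Real.exp (z k) / ∑ l, Real.exp (z l)

lemma sum_exp_pos' {ι : Type*} [Fintype ι] [Nonempty ι] (z : ι → ℝ) :
    0 < ∑ l, Real.exp (z l) :=
  Finset.sum_pos (fun l _ => Real.exp_pos _) Finset.univ_nonempty

lemma softmax_pos {ι : Type*} [Fintype ι] [Nonempty ι] (z : ι → ℝ) (k : ι) :
    0 < softmax z k :=
  div_pos (Real.exp_pos _) (sum_exp_pos' z)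

lemma softmax_hasFDerivAt {ι : Type*} [Fintype ι] [Nonempty ι] (k : ι) (z : ι → ℝ) :
    HasFDerivAt (fun w => softmax w k)
      (softmax z k • ((ContinuousLinearMap.proj k : (ι → ℝ) →L[ℝ] ℝ)
        - ∑ l, softmax z l • (ContinuousLinearMap.proj l : (ι → ℝ) →L[ℝ] ℝ))) z := by
  have hS : HasFDerivAt (fun w : ι → ℝ => ∑ l, Real.exp (w l))
      (∑ l, Real.exp (z l) • (ContinuousLinearMap.proj l : (ι → ℝ) →L[ℝ] ℝ)) z :=
    HasFDerivAt.fun_sum fun l _ => (hasFDerivAt_apply l z).exp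
  have hN : HasFDerivAt (fun w : ι → ℝ => Real.exp (w k))
      (Real.exp (z k) • (ContinuousLinearMap.proj k : (ι → ℝ) →L[ℝ] ℝ)) z :=
    (hasFDerivAt_apply k z).exp
  have hSne : (∑ l, Real.exp (z l)) ≠ 0 := (sum_exp_pos' z).ne'
  have hInv : HasFDerivAt (fun w : ι → ℝ => (∑ l, Real.exp (w l))⁻¹)
      ((-((∑ l, Real.exp (z l)) ^ 2)⁻¹) •
        (∑ l, Real.exp (z l) • (ContinuousLinearMap.proj l : (ι → ℝ) →L[ℝ] ℝ))) z :=
    (hasDerivAt_inv hSne).comp_hasFDerivAt z hS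
  have hmul : HasFDerivAt (fun w : ι → ℝ => Real.exp (w k) * (∑ l, Real.exp (w l))⁻¹) _ z :=
    hN.mul hInv
  have heq : (fun w : ι → ℝ => Real.exp (w k) * (∑ l, Real.exp (w l))⁻¹)
      = fun w => softmax w k := by
    funext w; rw [softmax, div_eq_mul_inv]
  rw [heq] at hmul
  refine hmul.congr_fderiv (Eq.symm ?_)
  ext v
  simp only [ContinuousLinearMap.smul_apply, ContinuousLinearMap.sub_apply,
    ContinuousLinearMap.add_apply, ContinuousLinearMap.coe_sum', Finset.sum_apply,
    ContinuousLinearMap.proj_apply, softmax, smul_eq_mul, neg_mul, neg_smul,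
    ContinuousLinearMap.neg_apply]
  rw [mul_neg, Finset.mul_sum, mul_sub, Finset.mul_sum, sub_eq_neg_add]
  congr 1
  · rw [neg_inj, Finset.mul_sum]
    refine Finset.sum_congr rfl fun i _ => ?_
    simp only [div_eq_mul_inv, sq, mul_inv]
    ring
  · field_simp

lemma neg_log_softmax_hasFDerivAt {ι : Type*} [Fintype ι] [Nonempty ι] (y : ι) (z : ι → ℝ) :
    HasFDerivAt (fun w => -Real.log (softmax w y))
      ((∑ l, softmax z l • (ContinuousLinearMap.proj l : (ι → ℝ) →L[ℝ] ℝ))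
        - ContinuousLinearMap.proj y) z := by
  have h : HasFDerivAt (fun w => -Real.log (softmax w y)) _ z :=
    ((softmax_hasFDerivAt y z).log (softmax_pos z y).ne').neg
  refine h.congr_fderiv (Eq.symm ?_)
  ext v
  have hy : softmax z y ≠ 0 := (softmax_pos z y).ne'
  simp only [ContinuousLinearMap.sub_apply, ContinuousLinearMap.coe_sum',
    Finset.sum_apply, ContinuousLinearMap.smul_apply, ContinuousLinearMap.proj_apply,
    ContinuousLinearMap.neg_apply, smul_eq_mul]
  rw [inv_mul_cancel_left₀ hy, neg_sub]

theorem soft_attention_grad_u (d m C : ℕ) (hd : 0 < d) (hm : 0 < m) (hC : 2 ≤ C)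
    (y : Fin C) (x : Fin m → EuclideanSpace ℝ (Fin d))
    (W : Fin C → EuclideanSpace ℝ (Fin d))
    (u : EuclideanSpace ℝ (Fin d))
    (a : Fin m → ℝ) (ha : a = softmax fun j => ⟪u, x j⟫)
    (xt : EuclideanSpace ℝ (Fin d)) (hxt : xt = ∑ j, a j • x j) :
    HasGradientAt
      (fun u' : EuclideanSpace ℝ (Fin d) =>
        -Real.log (softmax (fun i =>
          ⟪W i, ∑ j, softmax (fun j' => ⟪u', x j'⟫) j • x j⟫) y))
      (-(∑ j, (a j * ⟪x j, W y - ∑ k, softmax (fun i => ⟪W i, xt⟫) k • W k⟫) •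
          (x j - xt)))
      u := by
  haveI : Nonempty (Fin m) := ⟨⟨0, hm⟩⟩
  haveI : Nonempty (Fin C) := ⟨⟨0, by omega⟩⟩
  let E := EuclideanSpace ℝ (Fin d)
  set Z : E →L[ℝ] (Fin m → ℝ) := ContinuousLinearMap.pi (fun j => innerSL ℝ (x j)) with hZdef
  have hZapp : ∀ (u' : E), (fun j => ⟪u', x j⟫) = Z u' := by
    intro u'; funext j
    simp [hZdef, real_inner_comm]
  have haZ : a = softmax (Z u) := by rw [ha, hZapp]
  -- derivative of each attention weight
  have hA : ∀ j : Fin m, HasFDerivAt (fun u' : E => softmax (fun j' => ⟪u', x j'⟫) j)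
      ((softmax (Z u) j • ((ContinuousLinearMap.proj j : (Fin m → ℝ) →L[ℝ] ℝ)
        - ∑ l, softmax (Z u) l • (ContinuousLinearMap.proj l : (Fin m → ℝ) →L[ℝ] ℝ))).comp Z)
      u := by
    intro j
    have h := (softmax_hasFDerivAt j (Z u)).comp u Z.hasFDerivAt
    have : (fun u' : E => softmax (fun j' => ⟪u', x j'⟫) j)
        = (fun w => softmax w j) ∘ Z := by
      funext u'; simp [Function.comp, hZapp u']
    rw [this]; exact h
  -- derivative of the aggregated segment
  set DX : E →L[ℝ] E := ∑ j, ((softmax (Z u) j • ((ContinuousLinearMap.proj j : (Fin m → ℝ) →L[ℝ] ℝ)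
        - ∑ l, softmax (Z u) l • (ContinuousLinearMap.proj l : (Fin m → ℝ) →L[ℝ] ℝ))).comp Z).smulRight (x j) with hDXdef
  have hX : HasFDerivAt (fun u' : E => ∑ j, softmax (fun j' => ⟪u', x j'⟫) j • x j) DX u :=
    HasFDerivAt.fun_sum fun j _ => (hA j).smul_const (x j)
  have hXu : (∑ j, softmax (fun j' => ⟪u, x j'⟫) j • x j) = xt := by
    rw [hxt, ha]
  -- derivative of the logits
  have hzi : ∀ i : Fin C, HasFDerivAt
      (fun u' : E => ⟪W i, ∑ j, softmax (fun j' => ⟪u', x j'⟫) j • x j⟫)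
      ((innerSL ℝ (W i)).comp DX) u :=
    fun i => ((innerSL ℝ (W i)).hasFDerivAt).comp u hX
  have hPi : HasFDerivAt
      (fun u' : E => fun i : Fin C => ⟪W i, ∑ j, softmax (fun j' => ⟪u', x j'⟫) j • x j⟫)
      (ContinuousLinearMap.pi fun i => (innerSL ℝ (W i)).comp DX) u :=
    hasFDerivAt_pi.2 hzi
  have hL := (neg_log_softmax_hasFDerivAt y
      (fun i : Fin C => ⟪W i, ∑ j, softmax (fun j' => ⟪u, x j'⟫) j • x j⟫)).comp u hPi
  rw [hasGradientAt_iff_hasFDerivAt]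
  refine hL.congr_fderiv (Eq.symm ?_)
  rw [hXu]
  ext v
  set σ : Fin C → ℝ := softmax (fun i => ⟪W i, xt⟫) with hσ
  have hxtv : (⟪xt, v⟫ : ℝ) = ∑ l, a l * ⟪x l, v⟫ := by
    rw [hxt, sum_inner]
    exact Finset.sum_congr rfl fun l _ => real_inner_smul_left _ _ _
  have hDXv : DX v = ∑ j, (a j * (⟪x j, v⟫ - ⟪xt, v⟫)) • x j := by
    rw [hDXdef, hxtv]
    simp only [ContinuousLinearMap.coe_sum', Finset.sum_apply,
      ContinuousLinearMap.smulRight_apply, ContinuousLinearMap.comp_apply,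
      ContinuousLinearMap.smul_apply, ContinuousLinearMap.sub_apply,
      ContinuousLinearMap.proj_apply, smul_eq_mul, ← haZ, hZdef,
      ContinuousLinearMap.pi_apply, innerSL_apply_apply]
    rw [← hZdef, ← haZ]
  simp only [InnerProductSpace.toDual_apply_apply, ContinuousLinearMap.comp_apply,
    ContinuousLinearMap.sub_apply, ContinuousLinearMap.coe_sum', Finset.sum_apply,
    ContinuousLinearMap.smul_apply, ContinuousLinearMap.proj_apply,
    ContinuousLinearMap.pi_apply, innerSL_apply_apply, smul_eq_mul, hDXv]
  have h1 : ∑ l, σ l * ⟪W l, ∑ j, (a j * (⟪x j, v⟫ - ⟪xt, v⟫)) • x j⟫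
      = ⟪∑ k, σ k • W k, ∑ j, (a j * (⟪x j, v⟫ - ⟪xt, v⟫)) • x j⟫ := by
    rw [sum_inner]
    exact Finset.sum_congr rfl fun l _ => (real_inner_smul_left _ _ _).symm
  rw [h1, ← inner_sub_left, inner_neg_left, sum_inner, inner_sum, ← Finset.sum_neg_distrib]
  refine Finset.sum_congr rfl fun j _ => ?_
  simp only [real_inner_smul_left, real_inner_smul_right, inner_sub_left, inner_sub_right]
  rw [real_inner_comm (∑ k, σ k • W k) (x j), real_inner_comm (W y) (x j)]
  ring
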